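/- Let f_1, …, f_k be McNaughton functions on [0,1]^n. Then the set of strictly coherent books on f_1, …, f_k, regarded as a subset of ℝ^k via β ↦ (β_1,…,β_k), equals the relative interior of the set of coherent books on f_1, …, f_k. -/

import Mathlib

open Set MeasureTheory

/-- The unit cube `[0,1]^n` in `ℝ^n`. -/
def cube (n : ℕ) : Set (Fin n → ℝ) := Set.Icc 0 1

/-- `f` is a McNaughton function on `[0,1]^n`: continuous on the cube, `[0,1]`-valued there,
and piecewise affine with integer coefficients. -/
def IsMcNaughton (n : ℕ) (f : (Fin n → ℝ) → ℝ) : Prop :=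
  ContinuousOn f (cube n) ∧
  (∀ x ∈ cube n, f x ∈ Set.Icc (0 : ℝ) 1) ∧
  ∃ (m : ℕ) (a : Fin m → Fin n → ℤ) (b : Fin m → ℤ),
    ∀ x ∈ cube n, ∃ j : Fin m, f x = (b j : ℝ) + ∑ i, (a j i : ℝ) * x i

/-- The book `β` on `f 0, …, f (k-1)` is coherent: for every choice of stakes `σ`,
the bookmaker's balance is nonnegative under some valuation. -/
def Coherent (n k : ℕ) (f : Fin k → (Fin n → ℝ) → ℝ) (β : Fin k → ℝ) : Prop :=
  ∀ σ : Fin k → ℝ, ∃ x ∈ cube n, 0 ≤ ∑ i, σ i * (β i - f i x)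

/-- The book `β` on `f 0, …, f (k-1)` is strictly coherent: every possibility of loss
for the bookmaker is paired by a possibility of gain. -/
def StrictlyCoherent (n k : ℕ) (f : Fin k → (Fin n → ℝ) → ℝ) (β : Fin k → ℝ) : Prop :=
  ∀ σ : Fin k → ℝ, (∃ x ∈ cube n, ∑ i, σ i * (β i - f i x) < 0) →
    ∃ x' ∈ cube n, 0 < ∑ i, σ i * (β i - f i x')

section Aux
variable {E : Type*} [NormedAddCommGroup E] [NormedSpace ℝ E]

theorem my_intrinsic_top {t : Set E} (h : affineSpan ℝ t = ⊤) :
    intrinsicInterior ℝ t = interior t := by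
  have hset : ((affineSpan ℝ t : Set E)) = univ := by rw [h]; rfl
  have hopen : IsOpen ((affineSpan ℝ t : Set E)) := hset ▸ isOpen_univ
  have he := hopen.isOpenEmbedding_subtypeVal
  refine subset_antisymm ?_ interior_subset_intrinsicInterior
  rw [intrinsicInterior]
  refine interior_maximal ?_ (he.isOpenMap _ isOpen_interior)
  exact image_subset_iff.2 interior_subset

/-- The inclusion of the direction translated to `p`. -/
noncomputable def psi (W : Submodule ℝ E) (p : E) : W →ᵃⁱ[ℝ] E :=
  (AffineIsometryEquiv.constVAdd ℝ E p).toAffineIsometry.comp W.subtypeₗᵢ.toAffineIsometry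

@[simp] theorem psi_apply (W : Submodule ℝ E) (p : E) (w : W) : psi W p w = p + (w : E) := rfl

theorem span_top_aux {s : Set E} {p : E} (hp : p ∈ s) :
    affineSpan ℝ {w : (affineSpan ℝ s).direction | p + (w : E) ∈ s} = ⊤ := by
  set W := (affineSpan ℝ s).direction with hW
  set s₀ : Set W := {w : W | p + (w : E) ∈ s} with hs₀
  have hmem : ∀ q ∈ s, q - p ∈ W := fun q hq =>
    AffineSubspace.vsub_mem_direction (subset_affineSpan ℝ s hq) (subset_affineSpan ℝ s hp)
  have h0 : (0 : W) ∈ s₀ := by simpa [s₀] using hp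
  rw [AffineSubspace.affineSpan_eq_top_iff_vectorSpan_eq_top_of_nonempty ℝ W W ⟨0, h0⟩]
  refine Submodule.map_injective_of_injective W.injective_subtype ?_
  rw [Submodule.map_subtype_top]
  have himg2 : W.subtype '' (s₀ -ᵥ s₀) = s -ᵥ s := by
    ext v
    simp only [Set.mem_image, Set.mem_vsub]
    constructor
    · rintro ⟨u, ⟨a, ha, b, hb, rfl⟩, rfl⟩
      exact ⟨p + (a : E), ha, p + (b : E), hb, by simp [vsub_eq_sub]⟩
    · rintro ⟨q, hq, r, hr, rfl⟩
      refine ⟨⟨q - p, hmem q hq⟩ -ᵥ ⟨r - p, hmem r hr⟩, Set.vsub_mem_vsub ?_ ?_, ?_⟩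
      · simpa [s₀] using hq
      · simpa [s₀] using hr
      · simp [vsub_eq_sub]
  calc Submodule.map W.subtype (vectorSpan ℝ s₀)
      = Submodule.span ℝ (W.subtype '' (s₀ -ᵥ s₀)) := by
        rw [vectorSpan_def, Submodule.map_span]
    _ = vectorSpan ℝ s := by rw [himg2, vectorSpan_def]
    _ = W := (direction_affineSpan ℝ s).symm

set_option maxHeartbeats 1000000 in
theorem bridge {s : Set E} {p : E} (hp : p ∈ s) :
    intrinsicInterior ℝ s =
      (fun w : (affineSpan ℝ s).direction => p + (w : E)) ''
        interior {w : (affineSpan ℝ s).direction | p + (w : E) ∈ s} := by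
  set W := (affineSpan ℝ s).direction with hW
  set s₀ : Set W := {w : W | p + (w : E) ∈ s} with hs₀
  have hmem : ∀ q ∈ s, q - p ∈ W := fun q hq =>
    AffineSubspace.vsub_mem_direction (subset_affineSpan ℝ s hq) (subset_affineSpan ℝ s hp)
  have himg : s = psi W p '' s₀ := by
    ext q
    constructor
    · intro hq
      exact ⟨⟨q - p, hmem q hq⟩, by simpa [s₀] using hq, by simp⟩
    · rintro ⟨w, hw, rfl⟩
      simpa [s₀] using hw
  have htop : affineSpan ℝ s₀ = ⊤ := span_top_aux hp
  calc intrinsicInterior ℝ s = intrinsicInterior ℝ (psi W p '' s₀) := by rw [← himg]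
    _ = psi W p '' intrinsicInterior ℝ s₀ := (psi W p).image_intrinsicInterior s₀
    _ = (fun w : W => p + (w : E)) '' interior s₀ := by
        rw [my_intrinsic_top htop]; rfl

/-- From a point in the intrinsic interior, one can push past it within the set. -/
theorem my_extend {s : Set E} {β y : E} (hβ : β ∈ intrinsicInterior ℝ s) (hy : y ∈ s) :
    ∃ t : ℝ, 0 < t ∧ β + t • (β - y) ∈ s := by
  have hβs : β ∈ s := intrinsicInterior_subset hβ
  set W := (affineSpan ℝ s).direction with hW
  set s₀ : Set W := {w : W | β + (w : E) ∈ s} with hs₀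
  rw [bridge hβs] at hβ
  obtain ⟨w, hw, hwe⟩ := hβ
  have hw0 : w = 0 := by
    have h1 : β + (w : E) = β := hwe
    exact Subtype.ext (by simpa using add_eq_left.mp h1)
  rw [hw0] at hw
  have hyW : y - β ∈ W :=
    AffineSubspace.vsub_mem_direction (subset_affineSpan ℝ s hy) (subset_affineSpan ℝ s hβs)
  set wy : W := ⟨y - β, hyW⟩ with hwy
  have hc : Continuous fun t : ℝ => (-t) • wy := by continuity
  have h00 : (fun t : ℝ => (-t) • wy) 0 = 0 := by simp
  have hev : (fun t : ℝ => (-t) • wy) ⁻¹' interior s₀ ∈ nhds (0 : ℝ) :=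
    hc.continuousAt.preimage_mem_nhds (by simpa using isOpen_interior.mem_nhds hw)
  obtain ⟨ε, hεpos, hball⟩ := Metric.mem_nhds_iff.1 hev
  refine ⟨ε / 2, by positivity, ?_⟩
  have hmem : (-(ε / 2)) • wy ∈ interior s₀ := by
    apply hball
    have habs : |ε / 2| < ε := by rw [abs_of_pos (by positivity)]; linarith
    simp only [Metric.mem_ball, Real.dist_eq, sub_zero]
    exact habs
  have hmem2' : (-(ε / 2)) • wy ∈ s₀ := interior_subset hmem
  have hmem2 : β + (((-(ε / 2)) • wy : W) : E) ∈ s := hmem2'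
  have hcoe : (((-(ε / 2)) • wy : W) : E) = (ε / 2) • (β - y) := by
    rw [hwy]
    push_cast
    module
  rwa [hcoe] at hmem2

/-- Supporting functional at a relative boundary point of a convex set. -/
theorem my_support [FiniteDimensional ℝ E] {s : Set E} {β : E} (hs : Convex ℝ s) (hβ : β ∈ s)
    (hni : β ∉ intrinsicInterior ℝ s) :
    ∃ φ : E →ₗ[ℝ] ℝ, (∀ y ∈ s, φ β ≤ φ y) ∧ ∃ y ∈ s, φ β < φ y := by
  set W := (affineSpan ℝ s).direction with hW
  set s₀ : Set W := {w : W | β + (w : E) ∈ s} with hs₀def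
  have h0 : (0 : W) ∈ s₀ := by simpa [s₀] using hβ
  have hs₀conv : Convex ℝ s₀ := by
    have h := hs.affine_preimage (psi W β).toAffineMap
    exact h
  have hni0 : (0 : W) ∉ interior s₀ := by
    intro h
    exact hni (by rw [bridge hβ]; exact ⟨0, h, by simp⟩)
  have htop : affineSpan ℝ s₀ = ⊤ := span_top_aux hβ
  have hne : (interior s₀).Nonempty :=
    (hs₀conv.interior_nonempty_iff_affineSpan_eq_top).2 htop
  obtain ⟨φ₀, hφ₀⟩ := geometric_hahn_banach_open_point hs₀conv.interior isOpen_interior hni0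
  have hφ₀' : ∀ a ∈ interior s₀, φ₀ a < 0 := by
    intro a ha; simpa using hφ₀ a ha
  obtain ⟨y₀, hy₀⟩ := hne
  have hy₀v : φ₀ y₀ < 0 := hφ₀' y₀ hy₀
  have hneg : ∀ a ∈ s₀, φ₀ a ≤ 0 := by
    intro a ha
    by_contra hpos
    push_neg at hpos
    set d : ℝ := φ₀ a - φ₀ y₀ with hd
    have hdpos : 0 < d := by linarith
    set t : ℝ := φ₀ a / (2 * d) with ht
    have ht0 : 0 < t := by positivity
    have ht1 : t ≤ 1 / 2 := by
      rw [ht, div_le_div_iff₀ (by positivity) (by norm_num)]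
      nlinarith
    have hcombo : t • y₀ + (1 - t) • a ∈ interior s₀ :=
      hs₀conv.combo_interior_self_mem_interior hy₀ ha ht0 (by linarith) (by ring)
    have hlt := hφ₀' _ hcombo
    rw [map_add, _root_.map_smul, _root_.map_smul] at hlt
    have htd : t * d = φ₀ a / 2 := by
      rw [ht]; field_simp
    simp only [smul_eq_mul] at hlt
    nlinarith
  obtain ⟨g, hg⟩ := LinearMap.exists_extend (φ₀.toLinearMap : W →ₗ[ℝ] ℝ)
  refine ⟨-g, ?_, ?_⟩
  · intro y hy
    have hyW : y - β ∈ W :=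
      AffineSubspace.vsub_mem_direction (subset_affineSpan ℝ s hy) (subset_affineSpan ℝ s hβ)
    have hmem : (⟨y - β, hyW⟩ : W) ∈ s₀ := by simp [s₀]; simpa using hy
    have hval : g (y - β) = φ₀ ⟨y - β, hyW⟩ := by
      have := congrFun (congrArg (fun h => h.toFun) hg) ⟨y - β, hyW⟩
      simpa using this
    have hle := hneg _ hmem
    rw [← hval] at hle
    simp only [LinearMap.neg_apply, neg_le_neg_iff]
    have : g y - g β ≤ 0 := by rw [← map_sub]; exact hle
    linarith
  · have hy₀s : y₀ ∈ s₀ := interior_subset hy₀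
    refine ⟨β + (y₀ : E), hy₀s, ?_⟩
    have hval : g ((y₀ : E)) = φ₀ y₀ := by
      have := congrFun (congrArg (fun h => h.toFun) hg) y₀
      simpa using this
    simp only [LinearMap.neg_apply, map_add, neg_lt_neg_iff]
    linarith
end Aux

noncomputable def gmap {k : ℕ} (σ : Fin k → ℝ) : (Fin k → ℝ) →ₗ[ℝ] ℝ :=
  ∑ i, σ i • LinearMap.proj i

theorem gmap_apply {k : ℕ} (σ y : Fin k → ℝ) : gmap σ y = ∑ i, σ i * y i := by
  simp [gmap]

theorem stmt3 (n k : ℕ) (f : Fin k → (Fin n → ℝ) → ℝ) (hf : ∀ i, IsMcNaughton n (f i)) :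
    {β : Fin k → ℝ | (∀ i, β i ∈ Set.Icc (0 : ℝ) 1) ∧ StrictlyCoherent n k f β} =
    intrinsicInterior ℝ {β : Fin k → ℝ | (∀ i, β i ∈ Set.Icc (0 : ℝ) 1) ∧ Coherent n k f β} := by
  classical
  set F : (Fin n → ℝ) → Fin k → ℝ := fun x i => f i x with hFdef
  set V : Set (Fin k → ℝ) := F '' cube n with hVdef
  set K : Set (Fin k → ℝ) := closure (convexHull ℝ V) with hKdef
  have hcube0 : (0 : Fin n → ℝ) ∈ cube n := ⟨le_refl _, zero_le_one⟩
  have hVne : V.Nonempty := ⟨F 0, ⟨0, hcube0, rfl⟩⟩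
  have hccube : IsCompact (cube n) := isCompact_Icc
  have hFcont : ContinuousOn F (cube n) := continuousOn_pi.2 fun i => (hf i).1
  have hVcpt : IsCompact V := hccube.image_of_continuousOn hFcont
  have hKconv : Convex ℝ K := (convex_convexHull ℝ V).closure
  have hKcl : IsClosed K := isClosed_closure
  have hVK : V ⊆ K := (subset_convexHull ℝ V).trans subset_closure
  have hVIcc : V ⊆ Set.Icc (0 : Fin k → ℝ) 1 := by
    rintro _ ⟨x, hx, rfl⟩
    refine ⟨fun i => ?_, fun i => ?_⟩
    · exact ((hf i).2.1 x hx).1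
    · exact ((hf i).2.1 x hx).2
  have hKIcc : ∀ β ∈ K, ∀ i, β i ∈ Set.Icc (0 : ℝ) 1 := by
    intro β hβ i
    have h := closure_minimal (convexHull_min hVIcc (convex_Icc _ _)) isClosed_Icc hβ
    exact ⟨h.1 i, h.2 i⟩
  have hsum : ∀ (σ β : Fin k → ℝ) (x : Fin n → ℝ),
      ∑ i, σ i * (β i - f i x) = gmap σ β - gmap σ (F x) := by
    intro σ β x
    simp [gmap_apply, mul_sub, Finset.sum_sub_distrib]; rfl
  have hmin : ∀ σ : Fin k → ℝ, ∃ x ∈ cube n, ∀ z ∈ K, gmap σ (F x) ≤ gmap σ z := by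
    intro σ
    obtain ⟨v, hvV, hvmin⟩ := hVcpt.exists_isMinOn hVne
      (gmap σ).continuous_of_finiteDimensional.continuousOn
    obtain ⟨x, hx, rfl⟩ := hvV
    refine ⟨x, hx, fun z hz => ?_⟩
    have hhalf : K ⊆ {y | gmap σ (F x) ≤ gmap σ y} := by
      refine closure_minimal (convexHull_min (fun v' hv' => hvmin hv') ?_) ?_
      · exact convex_halfSpace_ge (gmap σ).isLinear _
      · exact isClosed_le continuous_const (gmap σ).continuous_of_finiteDimensional
    exact hhalf hz
  have hφeqgen : ∀ (φ : (Fin k → ℝ) →ₗ[ℝ] ℝ) (y : Fin k → ℝ),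
      φ y = gmap (fun i => φ (fun j => if i = j then 1 else 0)) y := by
    intro φ y
    conv_lhs => rw [pi_eq_sum_univ y]
    rw [map_sum]
    simp [gmap_apply, mul_comm]
  have hcohK : ∀ β, Coherent n k f β ↔ β ∈ K := by
    intro β
    constructor
    · intro hc
      by_contra hβ
      obtain ⟨φ, u, hφK, hφβ⟩ := geometric_hahn_banach_closed_point hKconv hKcl hβ
      set σ : Fin k → ℝ := fun i => φ (fun j => if i = j then 1 else 0) with hσ
      have hφeq : ∀ y : Fin k → ℝ, φ y = gmap σ y := fun y => hφeqgen φ.toLinearMap y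
      obtain ⟨x, hx, hge⟩ := hc (fun i => -σ i)
      have h1 : ∑ i, (-σ i) * (β i - f i x) = -(∑ i, σ i * (β i - f i x)) := by
        rw [← Finset.sum_neg_distrib]
        exact Finset.sum_congr rfl fun i _ => by ring
      rw [h1, hsum] at hge
      have h2 : φ (F x) < u := hφK _ (hVK ⟨x, hx, rfl⟩)
      rw [hφeq (F x)] at h2
      rw [hφeq β] at hφβ
      linarith
    · intro hβ σ
      obtain ⟨x, hx, hminx⟩ := hmin σ
      exact ⟨x, hx, by rw [hsum]; linarith [hminx β hβ]⟩
  have hscI : ∀ β, StrictlyCoherent n k f β ↔ β ∈ intrinsicInterior ℝ K := by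
    intro β
    constructor
    · intro hsc
      have hcoh : Coherent n k f β := by
        intro σ
        by_contra h
        push_neg at h
        obtain ⟨x', hx', hpos⟩ := hsc σ ⟨0, hcube0, h 0 hcube0⟩
        linarith [h x' hx']
      have hβK : β ∈ K := (hcohK β).1 hcoh
      by_contra hni
      obtain ⟨φ, hφle, y, hyK, hφlt⟩ := my_support hKconv hβK hni
      set σ : Fin k → ℝ := fun i => φ (fun j => if i = j then 1 else 0) with hσ
      have hφeq : ∀ z : Fin k → ℝ, φ z = gmap σ z := fun z => hφeqgen φ z
      obtain ⟨x, hx, hmax⟩ := hmin (fun i => -σ i)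
      have hgneg : ∀ z : Fin k → ℝ, gmap (fun i => -σ i) z = -(gmap σ z) := by
        intro z
        rw [gmap_apply, gmap_apply, ← Finset.sum_neg_distrib]
        exact Finset.sum_congr rfl fun i _ => by ring
      have hxmax : ∀ z ∈ K, gmap σ z ≤ gmap σ (F x) := by
        intro z hz
        have := hmax z hz
        rw [hgneg, hgneg] at this
        linarith
      have h1 : gmap σ β < gmap σ (F x) := by
        have h2 := hxmax y hyK
        rw [hφeq β, hφeq y] at *
        linarith [hφlt]
      obtain ⟨x', hx', hpos⟩ := hsc σ ⟨x, hx, by rw [hsum]; linarith⟩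
      have hsupp := hφle (F x') (hVK ⟨x', hx', rfl⟩)
      rw [hφeq β, hφeq (F x')] at hsupp
      rw [hsum] at hpos
      linarith
    · intro hβ σ hx
      obtain ⟨x, hxc, hneg⟩ := hx
      rw [hsum] at hneg
      obtain ⟨t, ht, hz⟩ := my_extend hβ (hVK ⟨x, hxc, rfl⟩)
      obtain ⟨x', hx', hminx⟩ := hmin σ
      have hgz : gmap σ (β + t • (β - F x)) = gmap σ β + t * (gmap σ β - gmap σ (F x)) := by
        rw [map_add, _root_.map_smul, map_sub, smul_eq_mul]
      have hle := hminx _ hz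
      refine ⟨x', hx', ?_⟩
      rw [hsum]
      rw [hgz] at hle
      have hprod : t * (gmap σ β - gmap σ (F x)) < 0 := mul_neg_of_pos_of_neg ht (by linarith)
      linarith
  have hCset : {β : Fin k → ℝ | (∀ i, β i ∈ Set.Icc (0 : ℝ) 1) ∧ Coherent n k f β} = K := by
    ext β
    simp only [mem_setOf_eq]
    exact ⟨fun ⟨_, hc⟩ => (hcohK β).1 hc, fun hβ => ⟨hKIcc β hβ, (hcohK β).2 hβ⟩⟩
  rw [hCset]
  ext β
  simp only [mem_setOf_eq]
  exact ⟨fun ⟨_, hsc⟩ => (hscI β).1 hsc,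
    fun hβ => ⟨hKIcc β (intrinsicInterior_subset hβ), (hscI β).2 hβ⟩⟩
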